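/- (Equilibration of the critically damped reference process.) Let A := [[0, 1], [−1, −2]] and, for a, b ∈ ℝ, let S(T) := e^{−2T}·[[ (T+1)²·a + T²·b + e^{2T} − 1 − 2T − 2T², −T(T+1)·a + T(1−T)·b + 2T² ], [ −T(T+1)·a + T(1−T)·b + 2T², T²·a + (1−T)²·b − 2T² + 2T + e^{2T} − 1 ]]. Then as T → ∞: (i) exp(T·A) tends to the zero matrix, and (ii) S(T) tends to the 2×2 identity matrix. -/

import Mathlib

open Matrix Filter

/-- Covariance of the critically damped reference process started from `diag (a, b)`. -/
noncomputable def Scov (a b : ℝ) (T : ℝ) : Matrix (Fin 2) (Fin 2) ℝ :=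
  Real.exp (-2 * T) •
    !![(T + 1) ^ 2 * a + T ^ 2 * b + Real.exp (2 * T) - 1 - 2 * T - 2 * T ^ 2,
        -(T * (T + 1)) * a + T * (1 - T) * b + 2 * T ^ 2;
      -(T * (T + 1)) * a + T * (1 - T) * b + 2 * T ^ 2,
        T ^ 2 * a + (1 - T) ^ 2 * b - 2 * T ^ 2 + 2 * T + Real.exp (2 * T) - 1]

lemma exp_sq_zero {x : Matrix (Fin 2) (Fin 2) ℝ} (h : x ^ 2 = 0) :
    NormedSpace.exp x = 1 + x := by
  rw [show NormedSpace.exp x = ∑' n : ℕ, (n.factorial : ℝ)⁻¹ • x ^ n from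
    congrFun (NormedSpace.exp_eq_tsum ℝ) x]
  have hz : ∀ n ∉ ({0, 1} : Finset ℕ), (n.factorial : ℝ)⁻¹ • x ^ n = 0 := by
    intro n hn
    simp only [Finset.mem_insert, Finset.mem_singleton, not_or] at hn
    obtain ⟨k, rfl⟩ : ∃ k, n = k + 2 := ⟨n - 2, by omega⟩
    rw [pow_add, h, mul_zero, smul_zero]
  rw [tsum_eq_sum hz]
  rw [Finset.sum_pair (by norm_num : (0 : ℕ) ≠ 1)]
  simp [Nat.factorial]

lemma exp_algebraMap_matrix (r : ℝ) :
    NormedSpace.exp (algebraMap ℝ (Matrix (Fin 2) (Fin 2) ℝ) r) =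
      algebraMap ℝ (Matrix (Fin 2) (Fin 2) ℝ) (Real.exp r) := by
  letI : SeminormedRing (Matrix (Fin 2) (Fin 2) ℝ) := Matrix.linftyOpSemiNormedRing
  letI : NormedRing (Matrix (Fin 2) (Fin 2) ℝ) := Matrix.linftyOpNormedRing
  letI : NormedAlgebra ℝ (Matrix (Fin 2) (Fin 2) ℝ) := Matrix.linftyOpNormedAlgebra
  rw [Real.exp_eq_exp_ℝ, NormedSpace.algebraMap_exp_comm]
  rfl

lemma expTA (T : ℝ) :
    NormedSpace.exp (T • (!![0, 1; -1, -2] : Matrix (Fin 2) (Fin 2) ℝ)) =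
      Real.exp (-T) • !![1 + T, T; -T, 1 - T] := by
  have hsplit : T • (!![0, 1; -1, -2] : Matrix (Fin 2) (Fin 2) ℝ) =
      algebraMap ℝ _ (-T) + T • !![1, 1; -1, -1] := by
    rw [Algebra.algebraMap_eq_smul_one]
    ext i j
    fin_cases i <;> fin_cases j <;> simp [Matrix.one_apply] <;> ring
  have hsq : (T • (!![1, 1; -1, -1] : Matrix (Fin 2) (Fin 2) ℝ)) ^ 2 = 0 := by
    rw [smul_pow]
    have h0 : (!![1, 1; -1, -1] : Matrix (Fin 2) (Fin 2) ℝ) ^ 2 = 0 := by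
      rw [pow_two]
      ext i j
      fin_cases i <;> fin_cases j <;> simp [Matrix.mul_fin_two]
    rw [h0, smul_zero]
  have hcomm : Commute (algebraMap ℝ (Matrix (Fin 2) (Fin 2) ℝ) (-T))
      (T • !![1, 1; -1, -1]) := Algebra.commutes (-T) _
  rw [hsplit, Matrix.exp_add_of_commute _ _ hcomm, exp_sq_zero hsq,
    exp_algebraMap_matrix, Algebra.algebraMap_eq_smul_one]
  ext i j
  fin_cases i <;> fin_cases j <;>
    simp [Matrix.one_apply, Matrix.mul_apply, Fin.sum_univ_two] <;> ring

lemma tendsto_pow_mul_exp_neg_two (n : ℕ) :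
    Tendsto (fun T : ℝ => T ^ n * Real.exp (-2 * T)) atTop (nhds 0) := by
  have h2 : Tendsto (fun T : ℝ => 2 * T) atTop atTop :=
    tendsto_id.const_mul_atTop two_pos
  have h := (Real.tendsto_pow_mul_exp_neg_atTop_nhds_zero n).comp h2
  have h' := h.const_mul ((2 : ℝ) ^ n)⁻¹
  rw [mul_zero] at h'
  refine h'.congr fun T => ?_
  simp only [Function.comp]
  rw [mul_pow]
  field_simp

lemma tendsto_matrix_of_entries {f : ℝ → Matrix (Fin 2) (Fin 2) ℝ}
    {L : Matrix (Fin 2) (Fin 2) ℝ}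
    (h : ∀ i j, Tendsto (fun T => f T i j) atTop (nhds (L i j))) :
    Tendsto f atTop (nhds L) := by
  refine tendsto_pi_nhds.2 ?_
  intro i
  rw [tendsto_pi_nhds]
  exact h i

/-- Equilibration of the critically damped reference process: the mean-propagation matrix
`exp(T·A)` tends to `0` and the covariance `S(T)` tends to the identity as `T → ∞`. -/
theorem stmt14 (a b : ℝ) :
    Tendsto (fun T : ℝ => NormedSpace.exp (T • (!![0, 1; -1, -2] : Matrix (Fin 2) (Fin 2) ℝ)))
      atTop (nhds (0 : Matrix (Fin 2) (Fin 2) ℝ)) ∧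
    Tendsto (Scov a b) atTop (nhds (1 : Matrix (Fin 2) (Fin 2) ℝ)) := by
  have E2 := tendsto_pow_mul_exp_neg_two
  have E1 := Real.tendsto_pow_mul_exp_neg_atTop_nhds_zero
  have hone : Tendsto (fun T : ℝ => Real.exp (-2 * T) * Real.exp (2 * T)) atTop (nhds 1) := by
    refine tendsto_const_nhds.congr fun T => ?_
    rw [← Real.exp_add]
    norm_num
  constructor
  · refine tendsto_matrix_of_entries fun i j => ?_
    simp only [expTA]
    fin_cases i <;> fin_cases j <;>
      simp only [Matrix.smul_apply, Matrix.zero_apply, smul_eq_mul, Fin.isValue,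
        Matrix.cons_val', Matrix.cons_val_zero, Matrix.cons_val_one, Matrix.head_cons,
        Matrix.head_fin_const, Matrix.empty_val', Matrix.cons_val_fin_one]
    · have h := ((E1 0).const_mul (1 : ℝ)).add ((E1 1).const_mul (1 : ℝ))
      norm_num at h
      exact h.congr fun T => by simp [Fin.mk_zero, Fin.mk_one]; ring
    · have h := (E1 1).const_mul (1 : ℝ)
      norm_num at h
      exact h.congr fun T => by simp [Fin.mk_zero, Fin.mk_one]; ring
    · have h := (E1 1).const_mul (-1 : ℝ)
      norm_num at h
      exact h.congr fun T => by simp [Fin.mk_zero, Fin.mk_one]; ring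
    · have h := ((E1 0).const_mul (1 : ℝ)).add ((E1 1).const_mul (-1 : ℝ))
      norm_num at h
      exact h.congr fun T => by simp [Fin.mk_zero, Fin.mk_one]; ring
  · refine tendsto_matrix_of_entries fun i j => ?_
    fin_cases i <;> fin_cases j <;>
      simp only [Scov, Matrix.smul_apply, Matrix.one_apply, smul_eq_mul, Fin.isValue,
        Matrix.cons_val', Matrix.cons_val_zero, Matrix.cons_val_one, Matrix.head_cons,
        Matrix.head_fin_const, Matrix.empty_val', Matrix.cons_val_fin_one, if_true,
        reduceIte]
    · have h := hone.add (((E2 0).const_mul (a - 1)).add (((E2 1).const_mul (2 * a - 2)).add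
        ((E2 2).const_mul (a + b - 2))))
      norm_num at h
      exact h.congr fun T => by simp [Fin.mk_zero, Fin.mk_one]; ring
    · have h := ((E2 1).const_mul (b - a)).add ((E2 2).const_mul (2 - a - b))
      norm_num at h
      exact h.congr fun T => by simp [Fin.mk_zero, Fin.mk_one]; ring
    · have h := ((E2 1).const_mul (b - a)).add ((E2 2).const_mul (2 - a - b))
      norm_num at h
      exact h.congr fun T => by simp [Fin.mk_zero, Fin.mk_one]; ring
    · have h := hone.add (((E2 0).const_mul (b - 1)).add (((E2 1).const_mul (2 - 2 * b)).add
        ((E2 2).const_mul (a + b - 2))))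
      norm_num at h
      exact h.congr fun T => by simp [Fin.mk_zero, Fin.mk_one]; ring
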